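/- Let X be a metric space, let A be a subset of ℝ, and let (φ_α)_{α ∈ A} be a family of locally uniformly continuous functions φ_α : X → [0,1] such that every point of X has a neighborhood on which at most one of the functions φ_α is not identically zero. Let r ∈ ℝ, and define g_r : X → ℝ by g_r(x) = 1 − Σ_{α ∈ A} (1 − |α − r|)·φ_α(x) (the sum has at most one nonzero term at each x, so it is well defined). Then g_r is locally uniformly continuous. -/

import Mathlib

/-- If the `φ_α : X → [0,1]` are locally uniformly continuous and every point has a
neighborhood on which at most one `φ_α` is not identically zero, then
`g_r x = 1 - ∑_{α ∈ A} (1 - |α - r|) φ_α x` is locally uniformly continuous. -/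
theorem locallyUniformlyContinuous_of_partition_family
    {X : Type*} [MetricSpace X] (A : Set ℝ) (φ : A → X → ℝ)
    (hφ01 : ∀ (α : A) (x : X), φ α x ∈ Set.Icc (0 : ℝ) 1)
    (hluc : ∀ (α : A) (x : X), ∃ N ∈ nhds x, UniformContinuousOn (φ α) N)
    (hone : ∀ x : X, ∃ N ∈ nhds x, ∀ α β : A,
      (∃ y ∈ N, φ α y ≠ 0) → (∃ y ∈ N, φ β y ≠ 0) → α = β)
    (r : ℝ) (g : X → ℝ)
    (hg : ∀ x : X, g x = 1 - ∑ᶠ α : A, (1 - |(α : ℝ) - r|) * φ α x) :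
    ∀ x : X, ∃ N ∈ nhds x, UniformContinuousOn g N := by
  intro x
  obtain ⟨N₁, hN₁, hone₁⟩ := hone x
  by_cases hvan : ∀ α : A, ∀ y ∈ N₁, φ α y = 0
  · -- g is constant 1 on N₁
    refine ⟨N₁, hN₁, ?_⟩
    have hgeq : ∀ y ∈ N₁, g y = 1 := by
      intro y hy
      rw [hg y, finsum_eq_zero_of_forall_eq_zero (fun α => by rw [hvan α y hy, mul_zero]),
        sub_zero]
    rw [uniformContinuousOn_iff_restrict]
    have : Set.domRestrict N₁ g = fun _ => (1 : ℝ) := by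
      funext y; exact hgeq y y.2
    rw [this]
    exact uniformContinuous_const
  · push_neg at hvan
    obtain ⟨α, y₀, hy₀, hφy₀⟩ := hvan
    obtain ⟨N₂, hN₂, hUC⟩ := hluc α x
    refine ⟨N₁ ∩ N₂, Filter.inter_mem hN₁ hN₂, ?_⟩
    have hgeq : ∀ y ∈ N₁ ∩ N₂, g y = 1 - (1 - |(α : ℝ) - r|) * φ α y := by
      intro y hy
      rw [hg y]
      congr 1
      refine finsum_eq_single _ α (fun β hβ => ?_)
      have : φ β y = 0 := by
        by_contra h
        exact hβ (hone₁ β α ⟨y, hy.1, h⟩ ⟨y₀, hy₀, hφy₀⟩)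
      rw [this, mul_zero]
    rw [uniformContinuousOn_iff_restrict]
    have : Set.domRestrict (N₁ ∩ N₂) g =
        (fun t => 1 - (1 - |(α : ℝ) - r|) * t) ∘ Set.domRestrict (N₁ ∩ N₂) (φ α) := by
      funext y; exact hgeq y y.2
    rw [this]
    have h1 : UniformContinuous fun t : ℝ => 1 - (1 - |(α : ℝ) - r|) * t := by
      have : LipschitzWith (Real.nnabs (1 - |(α : ℝ) - r|))
          (fun t : ℝ => 1 - (1 - |(α : ℝ) - r|) * t) := by
        intro a b
        simp only [edist_sub_left]
        rw [edist_nndist, nndist_eq_nnnorm_sub, ← mul_sub, nnnorm_mul, ENNReal.coe_mul,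
          edist_nndist, nndist_eq_nnnorm_sub]
        gcongr
        simp [Real.nnabs]
        rfl
      exact this.uniformContinuous
    have hmono : UniformContinuousOn (φ α) (N₁ ∩ N₂) :=
      hUC.mono_left (inf_le_inf_left _ (Filter.principal_mono.mpr
        (Set.prod_mono Set.inter_subset_right Set.inter_subset_right)))
    exact h1.comp (uniformContinuousOn_iff_restrict.mp hmono)
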